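/- Let m ≥ 3 be an odd integer. The three elements [j,i], [j,j] and [j,k] belong to G₃(m), each is an involution (its square is the identity and it is not the identity), they are pairwise non-conjugate in G₃(m), and every element g ∈ G₃(m) of order two that fixes some nonzero quaternion is conjugate in G₃(m) to one of these three elements. -/

import Mathlib

noncomputable section

open Quaternion Real

/-- The quaternion `i`. -/
def qi : Quaternion ℝ := ⟨0, 1, 0, 0⟩
/-- The quaternion `j`. -/
def qj : Quaternion ℝ := ⟨0, 0, 1, 0⟩
/-- The quaternion `k`. -/
def qk : Quaternion ℝ := ⟨0, 0, 0, 1⟩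
/-- The unit quaternion `e_s = cos(π/s) + sin(π/s) i`. -/
def es (s : ℕ) : Quaternion ℝ := ⟨Real.cos (Real.pi / s), Real.sin (Real.pi / s), 0, 0⟩

lemma norm_eq_one_of_normSq {a : Quaternion ℝ} (h : Quaternion.normSq a = 1) : ‖a‖ = 1 := by
  have h2 : ‖a‖ * ‖a‖ = 1 := by rw [← Quaternion.normSq_eq_norm_mul_self, h]
  rcases mul_self_eq_one_iff.1 h2 with h' | h'
  · exact h'
  · nlinarith [norm_nonneg a]

lemma norm_qi : ‖qi‖ = 1 := norm_eq_one_of_normSq (by rw [Quaternion.normSq_def']; simp [qi])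
lemma norm_qj : ‖qj‖ = 1 := norm_eq_one_of_normSq (by rw [Quaternion.normSq_def']; simp [qj])
lemma norm_qk : ‖qk‖ = 1 := norm_eq_one_of_normSq (by rw [Quaternion.normSq_def']; simp [qk])
lemma norm_es (s : ℕ) : ‖es s‖ = 1 :=
  norm_eq_one_of_normSq (by
    rw [Quaternion.normSq_def']
    simp [es, Real.sin_sq_add_cos_sq, Real.cos_sq_add_sin_sq])

lemma self_mul_star_of_norm_one {a : Quaternion ℝ} (h : ‖a‖ = 1) : a * star a = 1 := by
  rw [Quaternion.self_mul_star]
  have h1 : Quaternion.normSq a = 1 := by rw [Quaternion.normSq_eq_norm_mul_self, h, mul_one]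
  rw [h1]; norm_num

lemma star_mul_self_of_norm_one {a : Quaternion ℝ} (h : ‖a‖ = 1) : star a * a = 1 := by
  rw [Quaternion.star_mul_self]
  have h1 : Quaternion.normSq a = 1 := by rw [Quaternion.normSq_eq_norm_mul_self, h, mul_one]
  rw [h1]; norm_num

/-- The rotation `[l,r] : x ↦ l̄ x r` of `ℝ⁴ ≅ ℍ`, for unit quaternions `l, r`. -/
def qrot (l r : Quaternion ℝ) (hl : ‖l‖ = 1) (hr : ‖r‖ = 1) :
    Quaternion ℝ ≃ₗ[ℝ] Quaternion ℝ where
  toFun x := star l * x * r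
  invFun x := l * x * star r
  map_add' x y := by noncomm_ring
  map_smul' c x := by simp [mul_smul_comm, smul_mul_assoc]
  left_inv x := by
    have h : l * (star l * x * r) * star r = (l * star l) * x * (r * star r) := by noncomm_ring
    simp [h, self_mul_star_of_norm_one hl, self_mul_star_of_norm_one hr]
  right_inv x := by
    have h : star l * (l * x * star r) * r = (star l * l) * x * (star r * r) := by noncomm_ring
    simp [h, star_mul_self_of_norm_one hl, star_mul_self_of_norm_one hr]

/-- The group `G₁(m)`. -/
def G1 (m : ℕ) : Subgroup (Quaternion ℝ ≃ₗ[ℝ] Quaternion ℝ) :=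
  Subgroup.closure
    {qrot (es m) 1 (norm_es m) norm_one,
     qrot 1 qi norm_one norm_qi,
     qrot 1 qj norm_one norm_qj,
     qrot qj (es 4) norm_qj (norm_es 4)}

/-- The group `G₂(m)`. -/
def G2 (m : ℕ) : Subgroup (Quaternion ℝ ≃ₗ[ℝ] Quaternion ℝ) :=
  Subgroup.closure
    {qrot (es m) 1 (norm_es m) norm_one,
     qrot 1 qi norm_one norm_qi,
     qrot (es (2 * m)) qj (norm_es (2 * m)) norm_qj,
     qrot qj (es 4) norm_qj (norm_es 4)}

/-- The group `G₃(m)`. -/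
def G3 (m : ℕ) : Subgroup (Quaternion ℝ ≃ₗ[ℝ] Quaternion ℝ) :=
  Subgroup.closure
    {qrot (es m) 1 (norm_es m) norm_one,
     qrot 1 qi norm_one norm_qi,
     qrot qj 1 norm_qj norm_one,
     qrot 1 qj norm_one norm_qj}

/-- The group `F₁(m)`. -/
def F1 (m : ℕ) : Subgroup (Quaternion ℝ ≃ₗ[ℝ] Quaternion ℝ) :=
  Subgroup.closure
    {qrot (es m) qi (norm_es m) norm_qi,
     qrot 1 qj norm_one norm_qj}

/-- The involution `[j, i]`. -/
def tau1 : Quaternion ℝ ≃ₗ[ℝ] Quaternion ℝ := qrot qj qi norm_qj norm_qi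
/-- The involution `[j, j]`. -/
def tau2 : Quaternion ℝ ≃ₗ[ℝ] Quaternion ℝ := qrot qj qj norm_qj norm_qj
/-- The involution `[j, k]`. -/
def tau3 : Quaternion ℝ ≃ₗ[ℝ] Quaternion ℝ := qrot qj qk norm_qj norm_qk

/-! ### Auxiliary material -/

set_option linter.unnecessarySeqFocus false
set_option maxHeartbeats 1000000

/-- The rotation quaternion `cos θ + sin θ · i`. -/
def rot (θ : ℝ) : Quaternion ℝ := ⟨Real.cos θ, Real.sin θ, 0, 0⟩

lemma rot_mul (θ φ : ℝ) : rot θ * rot φ = rot (θ + φ) := by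
  ext <;> simp <;> simp [rot, Real.cos_add, Real.sin_add] <;> ring

lemma star_rot (θ : ℝ) : star (rot θ) = rot (-θ) := by ext <;> simp <;> simp [rot]
lemma rot_zero : rot 0 = 1 := by ext <;> simp [rot]
lemma rot_pi : rot π = -1 := by ext <;> simp [rot]
lemma qj_rot (θ : ℝ) : qj * rot θ = rot (-θ) * qj := by ext <;> simp <;> simp [rot, qj]
lemma neg_rot (θ : ℝ) : -rot θ = rot (θ + π) := by rw [← rot_mul, rot_pi, mul_neg, mul_one]

lemma norm_rot (θ : ℝ) : ‖rot θ‖ = 1 :=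
  norm_eq_one_of_normSq (by rw [Quaternion.normSq_def']; simp [rot, Real.cos_sq_add_sin_sq])

lemma es_eq_rot (s : ℕ) : es s = rot (π / s) := rfl

lemma tbl_ii : qi * qi = -1 := by ext <;> simp <;> simp [qi]
lemma tbl_jj : qj * qj = -1 := by ext <;> simp <;> simp [qj]
lemma tbl_kk : qk * qk = -1 := by ext <;> simp <;> simp [qk]
lemma tbl_ij : qi * qj = qk := by ext <;> simp <;> simp [qi, qj, qk]
lemma tbl_ji : qj * qi = -qk := by ext <;> simp <;> simp [qi, qj, qk]
lemma tbl_jk : qj * qk = qi := by ext <;> simp <;> simp [qi, qj, qk]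
lemma tbl_kj : qk * qj = -qi := by ext <;> simp <;> simp [qi, qj, qk]
lemma tbl_ki : qk * qi = qj := by ext <;> simp <;> simp [qi, qj, qk]
lemma tbl_ik : qi * qk = -qj := by ext <;> simp <;> simp [qi, qj, qk]
lemma star_qi : star qi = -qi := by ext <;> simp <;> simp [qi]
lemma star_qj : star qj = -qj := by ext <;> simp <;> simp [qj]
lemma star_qk : star qk = -qk := by ext <;> simp <;> simp [qk]

lemma qrot_apply (l r : Quaternion ℝ) (hl hr) (x : Quaternion ℝ) :
    qrot l r hl hr x = star l * x * r := rfl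

lemma norm_mul_one {a b : Quaternion ℝ} (ha : ‖a‖ = 1) (hb : ‖b‖ = 1) : ‖a * b‖ = 1 := by
  rw [norm_mul, ha, hb, mul_one]

lemma norm_star_one {a : Quaternion ℝ} (ha : ‖a‖ = 1) : ‖star a‖ = 1 := by
  rw [norm_star]; exact ha

lemma qrot_congr {l r l' r' : Quaternion ℝ} (h1 : l = l') (h2 : r = r') (hl hr hl' hr') :
    qrot l r hl hr = qrot l' r' hl' hr' := by subst h1; subst h2; rfl

lemma qrot_mul (l r l' r' : Quaternion ℝ) (hl hr hl' hr') :
    qrot l r hl hr * qrot l' r' hl' hr' =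
      qrot (l' * l) (r' * r) (norm_mul_one hl' hl) (norm_mul_one hr' hr) := by
  apply LinearEquiv.ext; intro x
  show star l * (star l' * x * r') * r = star (l' * l) * x * (r' * r)
  rw [star_mul]; noncomm_ring

lemma qrot_one (h1 h2 : ‖(1 : Quaternion ℝ)‖ = 1) : qrot 1 1 h1 h2 = 1 := by
  apply LinearEquiv.ext; intro x
  show star 1 * x * 1 = x
  simp

lemma qrot_inv (l r : Quaternion ℝ) (hl hr) :
    (qrot l r hl hr)⁻¹ = qrot (star l) (star r) (norm_star_one hl) (norm_star_one hr) := by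
  apply inv_eq_of_mul_eq_one_right
  rw [qrot_mul]
  rw [qrot_congr (star_mul_self_of_norm_one hl) (star_mul_self_of_norm_one hr) _ _ norm_one norm_one]
  exact qrot_one _ _

lemma qrot_neg_neg (l r : Quaternion ℝ) (hl hr hl' hr') :
    qrot (-l) (-r) hl' hr' = qrot l r hl hr := by
  apply LinearEquiv.ext; intro x
  show star (-l) * x * (-r) = star l * x * r
  simp

lemma quat_re_of_comm {a : Quaternion ℝ} (h1 : a * qi = qi * a) (h2 : a * qj = qj * a) :
    a = ((a.re : ℝ) : Quaternion ℝ) := by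
  rw [Quaternion.ext_iff] at h1 h2 ⊢
  simp at h1 h2 ⊢
  simp [qi, qj] at h1 h2 ⊢
  obtain ⟨h1a, h1b⟩ := h1
  obtain ⟨h2a, h2b⟩ := h2
  refine ⟨?_, ?_, ?_⟩ <;> linarith

lemma qrot_eq_iff {l r l' r' : Quaternion ℝ} (hl hr hl' hr')
    (h : qrot l r hl hr = qrot l' r' hl' hr') :
    (l' = l ∧ r' = r) ∨ (l' = -l ∧ r' = -r) := by
  have happ : ∀ x : Quaternion ℝ, star l * x * r = star l' * x * r' := fun x =>
    LinearEquiv.congr_fun h x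
  have key : ∀ x : Quaternion ℝ, (l' * star l) * x = x * (r' * star r) := by
    intro x
    have h1 : l' * (star l * x * r) * star r = l' * (star l' * x * r') * star r := by
      rw [happ x]
    have lhs : l' * (star l * x * r) * star r = (l' * star l) * x * (r * star r) := by
      noncomm_ring
    have rhs : l' * (star l' * x * r') * star r = (l' * star l') * x * (r' * star r) := by
      noncomm_ring
    rw [lhs, rhs, self_mul_star_of_norm_one hr, self_mul_star_of_norm_one hl'] at h1
    simpa using h1
  have hab : l' * star l = r' * star r := by simpa using key 1
  have hcommi : (l' * star l) * qi = qi * (l' * star l) := by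
    have := key qi
    rw [← hab] at this
    exact this
  have hcommj : (l' * star l) * qj = qj * (l' * star l) := by
    have := key qj
    rw [← hab] at this
    exact this
  have hreal := quat_re_of_comm hcommi hcommj
  have hnorm : ‖l' * star l‖ = 1 := norm_mul_one hl' (norm_star_one hl)
  set c : ℝ := (l' * star l).re with hc
  have hcnorm : |c| = 1 := by
    rw [hreal] at hnorm
    simpa [Quaternion.norm_coe] using hnorm
  have hstar : star l * l = 1 := star_mul_self_of_norm_one hl
  have hstar2 : star r * r = 1 := star_mul_self_of_norm_one hr
  rcases abs_eq (by norm_num : (0:ℝ) ≤ 1) |>.mp hcnorm with hc1 | hc1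
  · left
    have hl1 : l' * star l = 1 := by rw [hreal, hc1]; norm_num
    have hr1 : r' * star r = 1 := by rw [← hab, hl1]
    constructor
    · have : l' * (star l * l) = 1 * l := by rw [← mul_assoc, hl1]
      simpa [hstar] using this
    · have : r' * (star r * r) = 1 * r := by rw [← mul_assoc, hr1]
      simpa [hstar2] using this
  · right
    have hl1 : l' * star l = -1 := by rw [hreal, hc1]; norm_num
    have hr1 : r' * star r = -1 := by rw [← hab, hl1]
    constructor
    · have : l' * (star l * l) = (-1) * l := by rw [← mul_assoc, hl1]
      simpa [hstar] using this
    · have : r' * (star r * r) = (-1) * r := by rw [← mul_assoc, hr1]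
      simpa [hstar2] using this

/-! ### The sets LS and RS -/

/-- Left components: the binary dihedral group generated by `e_m` and `j`. -/
def LS (m : ℕ) : Set (Quaternion ℝ) :=
  {x | ∃ t : ℤ, x = rot ((t : ℝ) * (π / m)) ∨ x = rot ((t : ℝ) * (π / m)) * qj}

/-- Right components: the quaternion group of order 8. -/
def RS : Set (Quaternion ℝ) := {1, -1, qi, -qi, qj, -qj, qk, -qk}

lemma one_mem_LS (m : ℕ) : (1 : Quaternion ℝ) ∈ LS m :=
  ⟨0, Or.inl (by norm_num [rot_zero])⟩

lemma qj_mem_LS (m : ℕ) : qj ∈ LS m :=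
  ⟨0, Or.inr (by norm_num [rot_zero])⟩

lemma es_mem_LS (m : ℕ) : es m ∈ LS m :=
  ⟨1, Or.inl (by rw [es_eq_rot]; norm_num)⟩

lemma LS_norm {m : ℕ} {x : Quaternion ℝ} (h : x ∈ LS m) : ‖x‖ = 1 := by
  obtain ⟨t, rfl | rfl⟩ := h
  · exact norm_rot _
  · exact norm_mul_one (norm_rot _) norm_qj

lemma angle_int (m : ℕ) (t u : ℤ) (h : t = u) :
    (t : ℝ) * (π / m) = (u : ℝ) * (π / m) := by rw [h]

lemma angle_pi (m : ℕ) (hm0 : (m : ℝ) ≠ 0) : ((m : ℤ) : ℝ) * (π / m) = π := by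
  push_cast
  field_simp

lemma rotj_mul_rotj (α β : ℝ) : (rot α * qj) * (rot β * qj) = rot (α - β + π) := by
  ext <;>
    simp <;> simp [rot, qj, Real.cos_add, Real.sin_add, Real.cos_sub, Real.sin_sub] <;> ring

lemma mem_qrot_congr {m : ℕ} {l l' r r' : Quaternion ℝ} (h1 : l = l') (h2 : r = r')
    {hl hr hl' hr'} (h : qrot l r hl hr ∈ G3 m) : qrot l' r' hl' hr' ∈ G3 m := by
  rw [qrot_congr h1.symm h2.symm hl' hr' hl hr]; exact h

lemma LS_mul {m : ℕ} (hm0 : (m : ℝ) ≠ 0) {x y : Quaternion ℝ}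
    (hx : x ∈ LS m) (hy : y ∈ LS m) : x * y ∈ LS m := by
  obtain ⟨t, rfl | rfl⟩ := hx <;> obtain ⟨u, rfl | rfl⟩ := hy
  · exact ⟨t + u, Or.inl (by rw [rot_mul]; push_cast; ring_nf)⟩
  · exact ⟨t + u, Or.inr (by rw [← mul_assoc, rot_mul]; push_cast; ring_nf)⟩
  · refine ⟨t - u, Or.inr ?_⟩
    rw [mul_assoc, qj_rot, ← mul_assoc, rot_mul]
    push_cast; ring_nf
  · refine ⟨t - u + m, Or.inl ?_⟩
    rw [rotj_mul_rotj]
    congr 1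
    push_cast
    field_simp
  
lemma LS_star {m : ℕ} (hm0 : (m : ℝ) ≠ 0) {x : Quaternion ℝ} (hx : x ∈ LS m) :
    star x ∈ LS m := by
  obtain ⟨t, rfl | rfl⟩ := hx
  · exact ⟨-t, Or.inl (by rw [star_rot]; push_cast; ring_nf)⟩
  · refine ⟨t + m, Or.inr ?_⟩
    rw [star_mul, star_rot, star_qj, neg_mul, qj_rot, neg_neg, ← neg_mul, neg_rot]
    congr 2
    push_cast
    field_simp

lemma RS_norm {x : Quaternion ℝ} (h : x ∈ RS) : ‖x‖ = 1 := by
  simp only [RS, Set.mem_insert_iff, Set.mem_singleton_iff] at h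
  rcases h with rfl | rfl | rfl | rfl | rfl | rfl | rfl | rfl <;>
    simp [norm_qi, norm_qj, norm_qk]

lemma RS_mul {x y : Quaternion ℝ} (hx : x ∈ RS) (hy : y ∈ RS) : x * y ∈ RS := by
  simp only [RS, Set.mem_insert_iff, Set.mem_singleton_iff] at hx hy ⊢
  rcases hx with rfl | rfl | rfl | rfl | rfl | rfl | rfl | rfl <;>
    rcases hy with rfl | rfl | rfl | rfl | rfl | rfl | rfl | rfl <;>
      simp [tbl_ii, tbl_jj, tbl_kk, tbl_ij, tbl_ji, tbl_jk, tbl_kj, tbl_ki, tbl_ik]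

lemma RS_star {x : Quaternion ℝ} (hx : x ∈ RS) : star x ∈ RS := by
  simp only [RS, Set.mem_insert_iff, Set.mem_singleton_iff] at hx ⊢
  rcases hx with rfl | rfl | rfl | rfl | rfl | rfl | rfl | rfl <;>
    simp [star_qi, star_qj, star_qk]

/-! ### Structure of G₃(m) -/

/-- Every element of `G₃(m)` is of the form `[l, r]` with `l ∈ LS m` and `r ∈ RS`. -/
lemma G3_struct (m : ℕ) (hm0 : (m : ℝ) ≠ 0) {g : Quaternion ℝ ≃ₗ[ℝ] Quaternion ℝ}
    (hg : g ∈ G3 m) :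
    ∃ (l r : Quaternion ℝ) (hl : ‖l‖ = 1) (hr : ‖r‖ = 1),
      l ∈ LS m ∧ r ∈ RS ∧ g = qrot l r hl hr := by
  refine Subgroup.closure_induction ?_ ?_ ?_ ?_ hg
  · intro x hx
    simp only [Set.mem_insert_iff, Set.mem_singleton_iff] at hx
    rcases hx with rfl | rfl | rfl | rfl
    · exact ⟨es m, 1, norm_es m, norm_one, es_mem_LS m, by simp [RS], rfl⟩
    · exact ⟨1, qi, norm_one, norm_qi, one_mem_LS m, by simp [RS], rfl⟩
    · exact ⟨qj, 1, norm_qj, norm_one, qj_mem_LS m, by simp [RS], rfl⟩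
    · exact ⟨1, qj, norm_one, norm_qj, one_mem_LS m, by simp [RS], rfl⟩
  · exact ⟨1, 1, norm_one, norm_one, one_mem_LS m, by simp [RS], (qrot_one _ _).symm⟩
  · rintro x y _ _ ⟨lx, rx, hlx, hrx, hlxm, hrxm, rfl⟩ ⟨ly, ry, hly, hry, hlym, hrym, rfl⟩
    exact ⟨ly * lx, ry * rx, norm_mul_one hly hlx, norm_mul_one hry hrx,
      LS_mul hm0 hlym hlxm, RS_mul hrym hrxm, by rw [qrot_mul]⟩
  · rintro x _ ⟨lx, rx, hlx, hrx, hlxm, hrxm, rfl⟩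
    exact ⟨star lx, star rx, norm_star_one hlx, norm_star_one hrx,
      LS_star hm0 hlxm, RS_star hrxm, by rw [qrot_inv]⟩

/-! ### Membership lemmas -/

lemma gen_es_mem (m : ℕ) : qrot (es m) 1 (norm_es m) norm_one ∈ G3 m :=
  Subgroup.subset_closure (by simp)

lemma gen_qi_mem (m : ℕ) : qrot 1 qi norm_one norm_qi ∈ G3 m :=
  Subgroup.subset_closure (by simp)

lemma gen_qj_left_mem (m : ℕ) : qrot qj 1 norm_qj norm_one ∈ G3 m :=
  Subgroup.subset_closure (by simp)

lemma gen_qj_mem (m : ℕ) : qrot 1 qj norm_one norm_qj ∈ G3 m :=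
  Subgroup.subset_closure (by simp)

lemma gen_one_mem (m : ℕ) : qrot 1 1 norm_one norm_one ∈ G3 m := by
  rw [qrot_one]; exact one_mem _

lemma rotpow_mem (m : ℕ) (s : ℤ) :
    qrot (rot ((s : ℝ) * (π / m))) 1 (norm_rot _) norm_one ∈ G3 m := by
  induction s using Int.induction_on with
  | zero =>
    exact mem_qrot_congr (show (1 : Quaternion ℝ) = rot (((0:ℤ) : ℝ) * (π / m)) by
      norm_num [rot_zero]) rfl (gen_one_mem m)
  | succ s ih =>
    have prod := mul_mem ih (gen_es_mem m)
    rw [qrot_mul] at prod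
    refine mem_qrot_congr ?_ (one_mul 1) prod
    rw [es_eq_rot, rot_mul]
    congr 1
    push_cast
    ring
  | pred s ih =>
    have prod := mul_mem ih (inv_mem (gen_es_mem m))
    rw [qrot_inv, qrot_mul] at prod
    refine mem_qrot_congr ?_ (by simp) prod
    rw [es_eq_rot, star_rot, rot_mul]
    congr 1
    push_cast
    ring

lemma rot_b_mem (m : ℕ) (s : ℤ) {b : Quaternion ℝ} (hb : ‖b‖ = 1)
    (hbG : qrot 1 b norm_one hb ∈ G3 m) :
    qrot (rot ((s : ℝ) * (π / m))) b (norm_rot _) hb ∈ G3 m := by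
  have key : qrot 1 b norm_one hb * qrot (rot ((s : ℝ) * (π / m))) 1 (norm_rot _) norm_one =
      qrot (rot ((s : ℝ) * (π / m))) b (norm_rot _) hb := by
    rw [qrot_mul]
    exact qrot_congr (mul_one _) (one_mul _) _ _ _ _
  exact key ▸ mul_mem hbG (rotpow_mem m s)

/-! ### No rotation in LS squares to -1 (m odd) -/

lemma rot_int_sq_ne_neg_one (m : ℕ) (hm0 : (m : ℝ) ≠ 0) (hodd : Odd m) (t : ℤ) :
    rot ((t : ℝ) * (π / m)) * rot ((t : ℝ) * (π / m)) ≠ -1 := by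
  rw [rot_mul]
  intro h
  have hre : Real.cos ((t : ℝ) * (π / m) + (t : ℝ) * (π / m)) = -1 := by
    have := congrArg QuaternionAlgebra.re h
    simpa [rot] using this
  have h2 : Real.cos ((t : ℝ) * (π / m) + (t : ℝ) * (π / m) - π) = 1 := by
    rw [Real.cos_sub, Real.cos_pi, Real.sin_pi, hre]; ring
  obtain ⟨n, hn⟩ := (Real.cos_eq_one_iff _).mp h2
  have hmm : ((2 * t : ℤ) : ℝ) * π = ((2 * n * m + m : ℤ) : ℝ) * π := by
    push_cast
    have hn' : (n : ℝ) * (2 * π) * m = ((t : ℝ) * (π / m) + (t : ℝ) * (π / m) - π) * m := by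
      rw [hn]
    field_simp at hn'
    ring_nf
    ring_nf at hn'
    linear_combination (-π) * hn'
  have hint : (2 * t : ℤ) = 2 * n * m + m := by
    exact_mod_cast mul_right_cancel₀ Real.pi_ne_zero hmm
  have heven : Even (2 * t : ℤ) := ⟨t, by ring⟩
  rw [hint] at heven
  have hoddm : Odd ((m : ℤ)) := (Int.odd_coe_nat m).mpr hodd
  have hodd2 : Odd (2 * n * (m : ℤ) + m) := by
    have e : (2 * n * (m : ℤ) + m) = (m : ℤ) * (2 * n + 1) := by ring
    rw [e]
    exact hoddm.mul ⟨n, by ring⟩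
  exact ((Int.not_odd_iff_even.mpr heven)) hodd2

/-! ### Conjugation -/

lemma qrot_conj (a b l r : Quaternion ℝ) (ha hb hl hr) :
    qrot a b ha hb * qrot l r hl hr * (qrot a b ha hb)⁻¹ =
      qrot (star a * (l * a)) (star b * (r * b))
        (norm_mul_one (norm_star_one ha) (norm_mul_one hl ha))
        (norm_mul_one (norm_star_one hb) (norm_mul_one hr hb)) := by
  rw [qrot_inv, qrot_mul, qrot_mul]

lemma rot_conj_j (α β : ℝ) :
    star (rot β) * ((rot α * qj) * rot β) = rot (α - 2 * β) * qj := by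
  rw [star_rot, mul_assoc (rot α) qj (rot β), qj_rot, ← mul_assoc (rot α), rot_mul,
    ← mul_assoc, rot_mul]
  congr 2
  ring

lemma neg_one_mul_qj : (-1 : Quaternion ℝ) * qj = -qj := by rw [neg_one_mul]

/-- The master conjugation construction. -/
lemma conj_construct (m : ℕ) (hm0 : (m : ℝ) ≠ 0) (t σ : ℤ) {b r w : Quaternion ℝ}
    (hb : ‖b‖ = 1) (hr : ‖r‖ = 1) (hw : ‖w‖ = 1)
    (hlr : ‖rot ((t : ℝ) * (π / m)) * qj‖ = 1)
    (hbG : qrot 1 b norm_one hb ∈ G3 m)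
    (hcase : (((t - 2 * σ : ℤ) : ℝ) = 0 ∧ star b * (r * b) = w)
           ∨ (((t - 2 * σ : ℤ) : ℝ) = (m : ℝ) ∧ star b * (r * b) = -w)) :
    ∃ h ∈ G3 m, h * qrot (rot ((t : ℝ) * (π / m)) * qj) r hlr hr * h⁻¹ = qrot qj w norm_qj hw := by
  refine ⟨qrot (rot ((σ : ℝ) * (π / m))) b (norm_rot _) hb, rot_b_mem m σ hb hbG, ?_⟩
  rw [qrot_conj]
  have hang : (t : ℝ) * (π / m) - 2 * ((σ : ℝ) * (π / m)) = ((t - 2 * σ : ℤ) : ℝ) * (π / m) := by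
    push_cast; ring
  have hleft : star (rot ((σ : ℝ) * (π / m))) *
      ((rot ((t : ℝ) * (π / m)) * qj) * rot ((σ : ℝ) * (π / m))) =
      rot (((t - 2 * σ : ℤ) : ℝ) * (π / m)) * qj := by
    rw [rot_conj_j, hang]
  rcases hcase with ⟨h0, hbw⟩ | ⟨h0, hbw⟩
  · refine qrot_congr ?_ hbw _ _ _ _
    rw [hleft, h0, zero_mul, rot_zero, one_mul]
  · have hpi : ((t - 2 * σ : ℤ) : ℝ) * (π / m) = π := by
      rw [h0]; field_simp
    have e1 : star (rot ((σ : ℝ) * (π / m))) *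
        ((rot ((t : ℝ) * (π / m)) * qj) * rot ((σ : ℝ) * (π / m))) = -qj := by
      rw [hleft, hpi, rot_pi, neg_one_mul_qj]
    calc qrot _ _ _ _ = qrot (-qj) (-w) (by rw [norm_neg]; exact norm_qj)
          (by rw [norm_neg]; exact hw) := qrot_congr e1 hbw _ _ _ _
      _ = qrot qj w norm_qj hw := qrot_neg_neg qj w norm_qj hw _ _

/-- Case analysis on the parity of `t`. -/
lemma conj_case (m : ℕ) (hm0 : (m : ℝ) ≠ 0) (hodd : Odd m) (t : ℤ) {r w b b' : Quaternion ℝ}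
    (hr : ‖r‖ = 1) (hw : ‖w‖ = 1) (hb : ‖b‖ = 1) (hb' : ‖b'‖ = 1)
    (hlr : ‖rot ((t : ℝ) * (π / m)) * qj‖ = 1)
    (hbG : qrot 1 b norm_one hb ∈ G3 m) (hb'G : qrot 1 b' norm_one hb' ∈ G3 m)
    (hbw : star b * (r * b) = w) (hb'w : star b' * (r * b') = -w) :
    ∃ h ∈ G3 m, h * qrot (rot ((t : ℝ) * (π / m)) * qj) r hlr hr * h⁻¹ = qrot qj w norm_qj hw := by
  rcases Int.even_or_odd t with ⟨s, hs⟩ | ⟨s, hs⟩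
  · refine conj_construct m hm0 t s hb hr hw hlr hbG (Or.inl ⟨?_, hbw⟩)
    have : (t - 2 * s : ℤ) = 0 := by omega
    rw [this]; norm_num
  · obtain ⟨k, hk⟩ := hodd
    refine conj_construct m hm0 t (s - k) hb' hr hw hlr hb'G (Or.inr ⟨?_, hb'w⟩)
    have : (t - 2 * (s - k) : ℤ) = (m : ℤ) := by omega
    rw [this]; norm_num

/-! ### Conjugation inside the quaternion group -/

lemma conj_RS_qi {b : Quaternion ℝ} (hb : b ∈ RS) :
    star b * (qi * b) = qi ∨ star b * (qi * b) = -qi := by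
  simp only [RS, Set.mem_insert_iff, Set.mem_singleton_iff] at hb
  rcases hb with rfl | rfl | rfl | rfl | rfl | rfl | rfl | rfl <;>
    simp [star_qi, star_qj, star_qk, tbl_ii, tbl_jj, tbl_kk, tbl_ij, tbl_ji, tbl_jk,
      tbl_kj, tbl_ki, tbl_ik]

lemma conj_RS_qj {b : Quaternion ℝ} (hb : b ∈ RS) :
    star b * (qj * b) = qj ∨ star b * (qj * b) = -qj := by
  simp only [RS, Set.mem_insert_iff, Set.mem_singleton_iff] at hb
  rcases hb with rfl | rfl | rfl | rfl | rfl | rfl | rfl | rfl <;>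
    simp [star_qi, star_qj, star_qk, tbl_ii, tbl_jj, tbl_kk, tbl_ij, tbl_ji, tbl_jk,
      tbl_kj, tbl_ki, tbl_ik]

lemma qj_ne_pm_qi : qj ≠ qi ∧ qj ≠ -qi := by
  constructor <;> (intro h; simp [Quaternion.ext_iff] at h; simp [qi, qj] at h)

lemma qk_ne_pm_qi : qk ≠ qi ∧ qk ≠ -qi := by
  constructor <;> (intro h; simp [Quaternion.ext_iff] at h; simp [qi, qk] at h)

lemma qk_ne_pm_qj : qk ≠ qj ∧ qk ≠ -qj := by
  constructor <;> (intro h; simp [Quaternion.ext_iff] at h; simp [qj, qk] at h)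

/-! ### The main case of the classification -/

lemma pure_case (m : ℕ) (hm0 : (m : ℝ) ≠ 0) (hodd : Odd m) {l r w b b' : Quaternion ℝ}
    (hl : ‖l‖ = 1) (hr : ‖r‖ = 1) (hw : ‖w‖ = 1) (hb : ‖b‖ = 1) (hb' : ‖b'‖ = 1)
    (hlLS : l ∈ LS m)
    (hbG : qrot 1 b norm_one hb ∈ G3 m) (hb'G : qrot 1 b' norm_one hb' ∈ G3 m)
    (hbw : star b * (r * b) = w) (hb'w : star b' * (r * b') = -w)
    (hrr : r * r = -1)
    (hsq' : ((1 : Quaternion ℝ) = l * l ∧ (1 : Quaternion ℝ) = r * r) ∨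
      ((1 : Quaternion ℝ) = -(l * l) ∧ (1 : Quaternion ℝ) = -(r * r))) :
    ∃ h ∈ G3 m, h * qrot l r hl hr * h⁻¹ = qrot qj w norm_qj hw := by
  have hll : l * l = -1 := by
    rcases hsq' with ⟨h1, h2⟩ | ⟨h1, -⟩
    · exfalso
      rw [hrr] at h2
      have h9 : (1 : ℝ) = -1 := by simpa using congrArg QuaternionAlgebra.re h2
      norm_num at h9
    · exact neg_eq_iff_eq_neg.mp h1.symm
  obtain ⟨t, hcase | hcase⟩ := hlLS
  · exfalso
    rw [hcase] at hll
    exact rot_int_sq_ne_neg_one m hm0 hodd t hll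
  · subst hcase
    exact conj_case m hm0 hodd t hr hw hb hb' hl hbG hb'G hbw hb'w

/-- `[j,i]`, `[j,j]` and `[j,k]` are pairwise non-conjugate involutions of `G₃(m)`,
and every order-two element of `G₃(m)` fixing a nonzero quaternion is conjugate in
`G₃(m)` to one of them. -/
theorem G3_three_isotropy_classes (m : ℕ) (hm : 3 ≤ m) (hodd : Odd m) :
    (tau1 ∈ G3 m ∧ tau2 ∈ G3 m ∧ tau3 ∈ G3 m) ∧
    (tau1 * tau1 = 1 ∧ tau1 ≠ 1) ∧
    (tau2 * tau2 = 1 ∧ tau2 ≠ 1) ∧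
    (tau3 * tau3 = 1 ∧ tau3 ≠ 1) ∧
    (¬∃ h ∈ G3 m, h * tau1 * h⁻¹ = tau2) ∧
    (¬∃ h ∈ G3 m, h * tau1 * h⁻¹ = tau3) ∧
    (¬∃ h ∈ G3 m, h * tau2 * h⁻¹ = tau3) ∧
    (∀ g ∈ G3 m, g * g = 1 → g ≠ 1 → (∃ x : Quaternion ℝ, x ≠ 0 ∧ g x = x) →
      ∃ h ∈ G3 m, h * g * h⁻¹ = tau1 ∨ h * g * h⁻¹ = tau2 ∨ h * g * h⁻¹ = tau3) := by
  have hm0 : (m : ℝ) ≠ 0 := by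
    have h3 : (0 : ℝ) < m := by
      have : 0 < m := by omega
      exact_mod_cast this
    exact ne_of_gt h3
  have tau1_eq : tau1 = qrot qj qi norm_qj norm_qi := rfl
  have tau2_eq : tau2 = qrot qj qj norm_qj norm_qj := rfl
  have tau3_eq : tau3 = qrot qj qk norm_qj norm_qk := rfl
  have hnegone : ‖(-1 : Quaternion ℝ)‖ = 1 := by rw [norm_neg]; exact norm_one
  refine ⟨⟨?_, ?_, ?_⟩, ⟨?_, ?_⟩, ⟨?_, ?_⟩, ⟨?_, ?_⟩, ?_, ?_, ?_, ?_⟩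
  -- tau1 ∈ G3 m
  · have h := mul_mem (gen_qj_left_mem m) (gen_qi_mem m)
    rw [qrot_mul] at h
    rw [tau1_eq]
    exact mem_qrot_congr (one_mul qj) (mul_one qi) h
  -- tau2 ∈ G3 m
  · have h := mul_mem (gen_qj_left_mem m) (gen_qj_mem m)
    rw [qrot_mul] at h
    rw [tau2_eq]
    exact mem_qrot_congr (one_mul qj) (mul_one qj) h
  -- tau3 ∈ G3 m
  · have h := mul_mem (mul_mem (gen_qj_left_mem m) (gen_qj_mem m)) (gen_qi_mem m)
    rw [qrot_mul, qrot_mul] at h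
    rw [tau3_eq]
    exact mem_qrot_congr (by rw [one_mul, one_mul]) (by rw [mul_one, tbl_ij]) h
  -- tau1 involution
  · rw [tau1_eq, qrot_mul, qrot_congr tbl_jj tbl_ii _ _ hnegone hnegone,
      qrot_neg_neg 1 1 norm_one norm_one]
    exact qrot_one _ _
  · intro hEq
    have h2 : tau1 1 = (1 : Quaternion ℝ ≃ₗ[ℝ] Quaternion ℝ) 1 := by rw [hEq]
    have h3 : qk = (1 : Quaternion ℝ) := by
      have h4 : tau1 1 = qk := by
        rw [tau1_eq, qrot_apply, star_qj]
        simp [tbl_ii, tbl_jj, tbl_kk, tbl_ij, tbl_ji, tbl_jk, tbl_kj, tbl_ki, tbl_ik]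
      rw [← h4, h2]; rfl
    norm_num [Quaternion.ext_iff] at h3; norm_num [qk] at h3
  -- tau2 involution
  · rw [tau2_eq, qrot_mul, qrot_congr tbl_jj tbl_jj _ _ hnegone hnegone,
      qrot_neg_neg 1 1 norm_one norm_one]
    exact qrot_one _ _
  · intro hEq
    have h2 : tau2 qi = (1 : Quaternion ℝ ≃ₗ[ℝ] Quaternion ℝ) qi := by rw [hEq]
    have h3 : -qi = qi := by
      have h4 : tau2 qi = -qi := by
        rw [tau2_eq, qrot_apply, star_qj]
        simp [tbl_ii, tbl_jj, tbl_kk, tbl_ij, tbl_ji, tbl_jk, tbl_kj, tbl_ki, tbl_ik]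
      rw [← h4, h2]; rfl
    norm_num [Quaternion.ext_iff] at h3; norm_num [qi] at h3
  -- tau3 involution
  · rw [tau3_eq, qrot_mul, qrot_congr tbl_jj tbl_kk _ _ hnegone hnegone,
      qrot_neg_neg 1 1 norm_one norm_one]
    exact qrot_one _ _
  · intro hEq
    have h2 : tau3 1 = (1 : Quaternion ℝ ≃ₗ[ℝ] Quaternion ℝ) 1 := by rw [hEq]
    have h3 : -qi = (1 : Quaternion ℝ) := by
      have h4 : tau3 1 = -qi := by
        rw [tau3_eq, qrot_apply, star_qj]
        simp [tbl_ii, tbl_jj, tbl_kk, tbl_ij, tbl_ji, tbl_jk, tbl_kj, tbl_ki, tbl_ik]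
      rw [← h4, h2]; rfl
    norm_num [Quaternion.ext_iff] at h3; norm_num [qi] at h3
  -- tau1 not conjugate to tau2
  · rintro ⟨h, hhG, hc⟩
    obtain ⟨a, b, ha, hb, haLS, hbRS, rfl⟩ := G3_struct m hm0 hhG
    rw [tau1_eq, tau2_eq, qrot_conj] at hc
    rcases qrot_eq_iff _ _ _ _ hc with ⟨-, h2⟩ | ⟨-, h2⟩ <;>
      rcases conj_RS_qi hbRS with hbi | hbi <;> rw [hbi] at h2 <;>
        (simp [Quaternion.ext_iff] at h2; simp [qi, qj] at h2)
  -- tau1 not conjugate to tau3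
  · rintro ⟨h, hhG, hc⟩
    obtain ⟨a, b, ha, hb, haLS, hbRS, rfl⟩ := G3_struct m hm0 hhG
    rw [tau1_eq, tau3_eq, qrot_conj] at hc
    rcases qrot_eq_iff _ _ _ _ hc with ⟨-, h2⟩ | ⟨-, h2⟩ <;>
      rcases conj_RS_qi hbRS with hbi | hbi <;> rw [hbi] at h2 <;>
        (simp [Quaternion.ext_iff] at h2; simp [qi, qk] at h2)
  -- tau2 not conjugate to tau3
  · rintro ⟨h, hhG, hc⟩
    obtain ⟨a, b, ha, hb, haLS, hbRS, rfl⟩ := G3_struct m hm0 hhG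
    rw [tau2_eq, tau3_eq, qrot_conj] at hc
    rcases qrot_eq_iff _ _ _ _ hc with ⟨-, h2⟩ | ⟨-, h2⟩ <;>
      rcases conj_RS_qj hbRS with hbi | hbi <;> rw [hbi] at h2 <;>
        (simp [Quaternion.ext_iff] at h2; simp [qj, qk] at h2)
  -- classification
  · intro g hg hsq hne hfix
    obtain ⟨x, hx0, hxfix⟩ := hfix
    obtain ⟨l, r, hl, hr, hlLS, hbRS, rfl⟩ := G3_struct m hm0 hg
    rw [qrot_mul] at hsq
    rw [← qrot_one norm_one norm_one] at hsq
    have hsq' := qrot_eq_iff _ _ _ _ hsq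
    simp only [RS, Set.mem_insert_iff, Set.mem_singleton_iff] at hbRS
    rcases hbRS with rfl | rfl | rfl | rfl | rfl | rfl | rfl | rfl
    -- r = 1
    · exfalso
      have hfix' : star l * x = x := by
        have h5 := hxfix
        rw [qrot_apply, mul_one] at h5
        exact h5
      have hsl : star l = 1 := mul_right_cancel₀ hx0 (by rw [hfix', one_mul])
      have hl1 : l = 1 := by
        have := congrArg star hsl
        simpa using this
      subst hl1
      exact hne (qrot_one hl hr)
    -- r = -1
    · exfalso
      have hfix' : star l * x = -x := by
        have h5 := hxfix
        rw [qrot_apply, mul_neg, mul_one] at h5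
        exact neg_eq_iff_eq_neg.mp h5
      have hsl : star l = -1 := mul_right_cancel₀ hx0 (by rw [hfix', neg_one_mul])
      have hl1 : l = -1 := by
        have := congrArg star hsl
        simpa using this
      subst hl1
      exact hne ((qrot_neg_neg 1 1 norm_one norm_one hl hr).trans (qrot_one _ _))
    -- r = qi
    · obtain ⟨h, hhG, hc⟩ := pure_case m hm0 hodd hl hr norm_qi norm_one norm_qj hlLS
        (gen_one_mem m) (gen_qj_mem m) (by simp) (by rw [tbl_ij, star_qj, neg_mul, tbl_jk])
        tbl_ii hsq'
      exact ⟨h, hhG, Or.inl (hc.trans tau1_eq.symm)⟩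
    -- r = -qi
    · obtain ⟨h, hhG, hc⟩ := pure_case m hm0 hodd hl hr norm_qi norm_qj norm_one hlLS
        (gen_qj_mem m) (gen_one_mem m)
        (by simp [star_qi, star_qj, star_qk, tbl_ii, tbl_jj, tbl_kk, tbl_ij, tbl_ji, tbl_jk, tbl_kj, tbl_ki, tbl_ik])
        (by simp) (by rw [neg_mul_neg, tbl_ii]) hsq'
      exact ⟨h, hhG, Or.inl (hc.trans tau1_eq.symm)⟩
    -- r = qj
    · obtain ⟨h, hhG, hc⟩ := pure_case m hm0 hodd hl hr norm_qj norm_one norm_qi hlLS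
        (gen_one_mem m) (gen_qi_mem m)
        (by simp) (by rw [tbl_ji, star_qi, neg_mul, mul_neg, tbl_ik, neg_neg])
        tbl_jj hsq'
      exact ⟨h, hhG, Or.inr (Or.inl (hc.trans tau2_eq.symm))⟩
    -- r = -qj
    · obtain ⟨h, hhG, hc⟩ := pure_case m hm0 hodd hl hr norm_qj norm_qi norm_one hlLS
        (gen_qi_mem m) (gen_one_mem m)
        (by simp [star_qi, star_qj, star_qk, tbl_ii, tbl_jj, tbl_kk, tbl_ij, tbl_ji, tbl_jk, tbl_kj, tbl_ki, tbl_ik])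
        (by simp) (by rw [neg_mul_neg, tbl_jj]) hsq'
      exact ⟨h, hhG, Or.inr (Or.inl (hc.trans tau2_eq.symm))⟩
    -- r = qk
    · obtain ⟨h, hhG, hc⟩ := pure_case m hm0 hodd hl hr norm_qk norm_one norm_qi hlLS
        (gen_one_mem m) (gen_qi_mem m)
        (by simp) (by rw [tbl_ki, star_qi, neg_mul, tbl_ij])
        tbl_kk hsq'
      exact ⟨h, hhG, Or.inr (Or.inr (hc.trans tau3_eq.symm))⟩
    -- r = -qk
    · obtain ⟨h, hhG, hc⟩ := pure_case m hm0 hodd hl hr norm_qk norm_qi norm_one hlLS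
        (gen_qi_mem m) (gen_one_mem m)
        (by simp [star_qi, star_qj, star_qk, tbl_ii, tbl_jj, tbl_kk, tbl_ij, tbl_ji, tbl_jk, tbl_kj, tbl_ki, tbl_ik])
        (by simp) (by rw [neg_mul_neg, tbl_kk]) hsq'
      exact ⟨h, hhG, Or.inr (Or.inr (hc.trans tau3_eq.symm))⟩
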